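/- Let φ : Γ → ℂ be a unital positive definite function, let n ≥ 1 and 0 ≤ i ≤ 2n be integers, let g ∈ Γ, and let a, b : Γ → ℂ be finitely supported functions with supp(a) ⊆ g·B_{2n−i} and supp(b) ⊆ g·B_i. Then | Σ_{x,h∈Γ} a(x)·conj(b(h))·φ(h⁻¹x) | ≤ W(n)·‖a‖₂·‖b‖₂. -/

import Mathlib

open MeasureTheory Filter Matrix
open scoped ENNReal ComplexOrder

noncomputable section

namespace Annealed

abbrev FG (r : ℕ) := FreeGroup (Fin r)

def wlen {r : ℕ} (g : FG r) : ℕ := (FreeGroup.toWord g).length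

theorem ball_finite (r n : ℕ) : {g : FG r | wlen g ≤ n}.Finite :=
  Set.Finite.preimage (FreeGroup.toWord_injective.injOn)
    (List.finite_length_le (Fin r × Bool) n)

def ballF (r n : ℕ) : Finset (FG r) := (ball_finite r n).toFinset

def sphereF (r n : ℕ) : Finset (FG r) := (ballF r n).filter (fun g => wlen g = n)

def phiMat1 {r : ℕ} (φ : FG r → ℂ) (F : Finset (FG r)) : Matrix F F ℂ :=
  Matrix.of fun p q => φ ((p : FG r)⁻¹ * (q : FG r))

def IsPosDefFn1 {r : ℕ} (φ : FG r → ℂ) : Prop :=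
  ∀ F : Finset (FG r), (phiMat1 φ F).PosSemidef

def wφ {r : ℕ} (φ : FG r → ℂ) (n : ℕ) : ℝ :=
  Real.sqrt (∑ g ∈ sphereF r (2 * n - 1), ‖φ g‖ ^ 2) +
    Real.sqrt (∑ g ∈ sphereF r (2 * n), ‖φ g‖ ^ 2)

def Wφ {r : ℕ} (φ : FG r → ℂ) (n : ℕ) : ℝ :=
  1 + 4 * ∑ ℓ ∈ Finset.Icc 1 n, ((n : ℝ) + 1 - (ℓ : ℝ)) ^ 2 * wφ φ ℓ

def l2norm {r : ℕ} (a : MonoidAlgebra ℂ (FG r)) : ℝ :=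
  Real.sqrt (∑ g ∈ a.coeff.support, ‖a.coeff g‖ ^ 2)



open FreeGroup

variable {α : Type*} [DecidableEq α]

/-- longest common prefix length -/
def lcp : List α → List α → ℕ
  | x :: xs, y :: ys => if x = y then lcp xs ys + 1 else 0
  | _, _ => 0

lemma lcp_le_left : ∀ (L M : List α), lcp L M ≤ L.length
  | [], _ => by simp [lcp]
  | _ :: _, [] => by simp [lcp]
  | x :: xs, y :: ys => by
    by_cases h : x = y <;> simp [lcp, h]
    exact lcp_le_left xs ys

lemma lcp_comm : ∀ (L M : List α), lcp L M = lcp M L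
  | [], [] => rfl
  | [], _ :: _ => rfl
  | _ :: _, [] => rfl
  | x :: xs, y :: ys => by
    by_cases h : x = y
    · simp [lcp, h]; exact lcp_comm xs ys
    · rw [lcp, lcp, if_neg h, if_neg (fun hh => h hh.symm)]

lemma lcp_le_right (L M : List α) : lcp L M ≤ M.length := by
  rw [lcp_comm]; exact lcp_le_left M L

lemma lcp_take : ∀ (L M : List α), L.take (lcp L M) = M.take (lcp L M)
  | [], M => by simp [lcp]
  | _ :: _, [] => by simp [lcp]
  | x :: xs, y :: ys => by
    by_cases h : x = y <;> simp [lcp, h]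
    exact lcp_take xs ys

lemma lcp_head : ∀ (L M : List α) (x : α), (L.drop (lcp L M)).head? = some x →
    (M.drop (lcp L M)).head? ≠ some x
  | [], M, x => by simp
  | _ :: _, [], x => by simp [lcp]
  | a :: xs, b :: ys, x => by
    by_cases h : a = b
    · simpa [lcp, h] using lcp_head xs ys x
    · simp only [lcp, if_neg h, List.drop_zero, List.head?_cons]
      intro ha hb
      exact h ((Option.some_injective _ ha).trans (Option.some_injective _ hb).symm)

lemma lcp_self : ∀ (L : List α), lcp L L = L.length
  | [] => rfl
  | x :: xs => by simp [lcp, lcp_self xs]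



open FreeGroup

section Red
variable {α : Type*} [DecidableEq α] {L L₁ L₂ : List (α × Bool)}

/-- A word is reduced. -/
def Rd (L : List (α × Bool)) : Prop := reduce L = L

lemma rd_toWord (x : FreeGroup α) : Rd x.toWord := reduce_toWord x

lemma toWord_mk_rd (h : Rd L) : (mk L).toWord = L := by rw [toWord_mk, h]

lemma rd_append_right (h : Rd (L₁ ++ L₂)) : Rd L₂ := by
  have h1 : Red (reduce (L₁ ++ L₂)) (L₁ ++ reduce L₂) := by
    rw [h]; exact Red.append_append Red.refl reduce.red
  have h2 := reduce.min h1
  rw [h] at h2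
  exact (List.append_cancel_left h2).symm

lemma rd_append_left (h : Rd (L₁ ++ L₂)) : Rd L₁ := by
  have h1 : Red (reduce (L₁ ++ L₂)) (reduce L₁ ++ L₂) := by
    rw [h]; exact Red.append_append reduce.red Red.refl
  have h2 := reduce.min h1
  rw [h] at h2
  exact (List.append_cancel_right h2).symm

lemma rd_invRev (h : Rd L) : Rd (invRev L) := by
  rw [Rd, reduce_invRev, h]

lemma rd_no_cancel {x y : α × Bool} {t : List (α × Bool)} (h : Rd (x :: y :: t)) :
    y ≠ (x.1, !x.2) := by
  rintro rfl
  have step : Red.Step (x :: (x.1, !x.2) :: t) t := by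
    have := @Red.Step.not α [] t x.1 x.2
    simpa using this
  have he := reduce.Step.eq step
  rw [Rd] at h; rw [h] at he
  have hle : (reduce t).length ≤ t.length := Red.length_le reduce.red
  have : (x :: (x.1, !x.2) :: t).length = (reduce t).length := by rw [he]
  simp at this; omega

lemma rd_append (h₁ : Rd L₁) (h₂ : Rd L₂)
    (hj : ∀ x y, L₁.getLast? = some x → L₂.head? = some y → y ≠ (x.1, !x.2)) :
    Rd (L₁ ++ L₂) := by
  induction L₁ with
  | nil => simpa
  | cons x L₁' ih =>
    have hL₁' : Rd L₁' := rd_append_right (L₁ := [x]) h₁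
    have hM : Rd (L₁' ++ L₂) := by
      apply ih hL₁'
      intro u y hu hy
      apply hj u y ?_ hy
      cases L₁' with
      | nil => simp at hu
      | cons c t => rw [List.getLast?_cons_cons]; exact hu
    rw [Rd, List.cons_append, reduce.cons, hM]
    cases hML : L₁' ++ L₂ with
    | nil => rfl
    | cons y t =>
      have hy : y ≠ (x.1, !x.2) := by
        cases L₁' with
        | nil =>
          simp only [List.nil_append] at hML
          exact hj x y (by simp) (by rw [hML]; rfl)
        | cons c t' =>
          have : c = y := by simpa using congrArg List.head? hML
          subst this
          exact rd_no_cancel h₁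
      have : ¬(x.1 = y.1 ∧ x.2 = !y.2) := by
        rintro ⟨h1, h2⟩
        apply hy
        have : y.2 = !x.2 := by rw [h2, Bool.not_not]
        exact Prod.ext h1.symm this
      simp [this]

lemma toWord_mul_of_len {x y : FreeGroup α}
    (h : (x * y).toWord.length = x.toWord.length + y.toWord.length) :
    (x * y).toWord = x.toWord ++ y.toWord :=
  (toWord_mul_sublist x y).eq_of_length (by simp [h])

/-- Main geometric decomposition: the reduced word of `q⁻¹ * p`. -/
lemma geom (q p : FreeGroup α) :
    (q⁻¹ * p).toWord =
      invRev (q.toWord.drop (lcp q.toWord p.toWord)) ++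
        p.toWord.drop (lcp q.toWord p.toWord) := by
  set P := q.toWord with hP
  set Q := p.toWord with hQ
  set m := lcp P Q with hm
  have hPrd : Rd P := rd_toWord q
  have hQrd : Rd Q := rd_toWord p
  have hPsplit : P.take m ++ P.drop m = P := List.take_append_drop _ _
  have hQsplit : P.take m ++ Q.drop m = Q := by rw [lcp_take P Q]; exact List.take_append_drop _ _
  have hq : q = mk (P.take m) * mk (P.drop m) := by rw [mul_mk, hPsplit, hP, mk_toWord]
  have hp : p = mk (P.take m) * mk (Q.drop m) := by rw [mul_mk, hQsplit, hQ, mk_toWord]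
  have hmul : q⁻¹ * p = mk (invRev (P.drop m) ++ Q.drop m) := by
    rw [hq, hp, ← mul_mk, ← inv_mk, _root_.mul_inv_rev, mul_assoc, inv_mul_cancel_left]
  rw [hmul, toWord_mk]
  apply rd_append (rd_invRev (rd_append_right (hPsplit ▸ hPrd)))
    (rd_append_right (hQsplit ▸ hQrd))
  intro u y hu hy
  have hhead : ((P.drop m).head?).map (fun g : α × Bool => (g.1, !g.2)) = some u := by
    rw [← List.head?_map, ← List.getLast?_reverse]; exact hu
  obtain ⟨z, hz, hzu⟩ := Option.map_eq_some_iff.1 hhead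
  intro hcon
  apply lcp_head P Q z hz
  rw [hy]
  congr 1
  rw [hcon, ← hzu]
  simp [Bool.not_not]

end Red


open Finset

lemma cs_kernel {γ : Type*} [DecidableEq γ] (U V : Finset γ) (β α : γ → ℝ) (K : γ → γ → ℝ)
    (hβ : ∀ u, 0 ≤ β u) (hα : ∀ v, 0 ≤ α v) (hK : ∀ u v, 0 ≤ K u v) :
    ∑ u ∈ U, ∑ v ∈ V, β u * (α v * K u v) ≤
      Real.sqrt (∑ u ∈ U, β u ^ 2) * Real.sqrt (∑ v ∈ V, α v ^ 2) *
        Real.sqrt (∑ u ∈ U, ∑ v ∈ V, K u v ^ 2) := by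
  have step1 : ∀ u, ∑ v ∈ V, α v * K u v ≤
      Real.sqrt (∑ v ∈ V, α v ^ 2) * Real.sqrt (∑ v ∈ V, K u v ^ 2) := fun u =>
    Real.sum_mul_le_sqrt_mul_sqrt V α (K u)
  calc ∑ u ∈ U, ∑ v ∈ V, β u * (α v * K u v)
      = ∑ u ∈ U, β u * ∑ v ∈ V, α v * K u v := by
        simp_rw [Finset.mul_sum]
    _ ≤ ∑ u ∈ U, β u * (Real.sqrt (∑ v ∈ V, α v ^ 2) * Real.sqrt (∑ v ∈ V, K u v ^ 2)) := by
        apply Finset.sum_le_sum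
        intro u _
        exact mul_le_mul_of_nonneg_left (step1 u) (hβ u)
    _ = Real.sqrt (∑ v ∈ V, α v ^ 2) * ∑ u ∈ U, β u * Real.sqrt (∑ v ∈ V, K u v ^ 2) := by
        rw [Finset.mul_sum]; congr 1; ext u; ring
    _ ≤ Real.sqrt (∑ v ∈ V, α v ^ 2) *
          (Real.sqrt (∑ u ∈ U, β u ^ 2) * Real.sqrt (∑ u ∈ U, Real.sqrt (∑ v ∈ V, K u v ^ 2) ^ 2)) := by
        apply mul_le_mul_of_nonneg_left _ (Real.sqrt_nonneg _)
        exact Real.sum_mul_le_sqrt_mul_sqrt U β _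
    _ = Real.sqrt (∑ u ∈ U, β u ^ 2) * Real.sqrt (∑ v ∈ V, α v ^ 2) *
          Real.sqrt (∑ u ∈ U, ∑ v ∈ V, K u v ^ 2) := by
        have : ∀ u, Real.sqrt (∑ v ∈ V, K u v ^ 2) ^ 2 = ∑ v ∈ V, K u v ^ 2 := fun u =>
          Real.sq_sqrt (Finset.sum_nonneg fun v _ => sq_nonneg _)
        simp_rw [this]; ring

lemma core {γ : Type*} [Group γ] [DecidableEq γ]
    (T : Finset (γ × γ)) (cf uf vf : γ → γ) (K : γ → γ → ℝ) (α β : γ → ℝ)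
    (M Na Nb : ℝ)
    (hα : ∀ p, 0 ≤ α p) (hβ : ∀ q, 0 ≤ β q) (hK : ∀ u v, 0 ≤ K u v)
    (hM : 0 ≤ M)
    (h1 : ∀ z ∈ T, cf z.1 * (uf z.1)⁻¹ = z.1)
    (h2 : ∀ z ∈ T, cf z.1 * vf z.2 = z.2)
    (hMK : ∀ U V : Finset γ, (∀ u ∈ U, ∃ z ∈ T, uf z.1 = u) →
        (∀ v ∈ V, ∃ z ∈ T, vf z.2 = v) → ∑ u ∈ U, ∑ v ∈ V, K u v ^ 2 ≤ M ^ 2)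
    (hNb2 : ∑ q ∈ T.image Prod.fst, β q ^ 2 ≤ Nb ^ 2)
    (hNa2 : ∑ p ∈ T.image Prod.snd, α p ^ 2 ≤ Na ^ 2)
    (hNa : 0 ≤ Na) (hNb : 0 ≤ Nb) :
    ∑ z ∈ T, β z.1 * α z.2 * K (uf z.1) (vf z.2) ≤ M * (Na * Nb) := by
  classical
  set C : Finset γ := T.image (fun z => cf z.1) with hC
  set Tc : γ → Finset (γ × γ) := fun c => T.filter (fun z => cf z.1 = c) with hTc
  set Uc : γ → Finset γ := fun c => (Tc c).image (fun z => uf z.1) with hUc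
  set Vc : γ → Finset γ := fun c => (Tc c).image (fun z => vf z.2) with hVc
  -- fiberwise decomposition
  have hfib : ∑ c ∈ C, ∑ z ∈ Tc c, β z.1 * α z.2 * K (uf z.1) (vf z.2)
      = ∑ z ∈ T, β z.1 * α z.2 * K (uf z.1) (vf z.2) :=
    Finset.sum_fiberwise_of_maps_to (fun z hz => Finset.mem_image_of_mem _ hz) _
  rw [← hfib]
  -- per-fiber bound
  have hBc : ∀ c ∈ C, ∑ u ∈ Uc c, β (c * u⁻¹) ^ 2 = ∑ q ∈ (Tc c).image Prod.fst, β q ^ 2 := by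
    intro c _
    have himg : (Uc c).image (fun u => c * u⁻¹) = (Tc c).image Prod.fst := by
      ext q
      simp only [hUc, Finset.mem_image, Finset.mem_image]
      constructor
      · rintro ⟨u, ⟨z, hz, rfl⟩, rfl⟩
        have hc : cf z.1 = c := (Finset.mem_filter.1 hz).2
        exact ⟨z, hz, by rw [← hc]; exact (h1 z (Finset.mem_filter.1 hz).1).symm⟩
      · rintro ⟨z, hz, rfl⟩
        have hc : cf z.1 = c := (Finset.mem_filter.1 hz).2
        exact ⟨uf z.1, ⟨z, hz, rfl⟩, by rw [← hc]; exact h1 z (Finset.mem_filter.1 hz).1⟩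
    rw [← himg, Finset.sum_image (fun u _ u' _ h => inv_injective (mul_left_cancel h))]
  have hAc : ∀ c ∈ C, ∑ v ∈ Vc c, α (c * v) ^ 2 = ∑ p ∈ (Tc c).image Prod.snd, α p ^ 2 := by
    intro c _
    have himg : (Vc c).image (fun v => c * v) = (Tc c).image Prod.snd := by
      ext p
      simp only [hVc, Finset.mem_image, Finset.mem_image]
      constructor
      · rintro ⟨v, ⟨z, hz, rfl⟩, rfl⟩
        have hc : cf z.1 = c := (Finset.mem_filter.1 hz).2
        exact ⟨z, hz, by rw [← hc]; exact (h2 z (Finset.mem_filter.1 hz).1).symm⟩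
      · rintro ⟨z, hz, rfl⟩
        have hc : cf z.1 = c := (Finset.mem_filter.1 hz).2
        exact ⟨vf z.2, ⟨z, hz, rfl⟩, by rw [← hc]; exact h2 z (Finset.mem_filter.1 hz).1⟩
    rw [← himg, Finset.sum_image (fun v _ v' _ h => mul_left_cancel h)]
  have hperc : ∀ c ∈ C, ∑ z ∈ Tc c, β z.1 * α z.2 * K (uf z.1) (vf z.2) ≤
      Real.sqrt (∑ u ∈ Uc c, β (c * u⁻¹) ^ 2) * Real.sqrt (∑ v ∈ Vc c, α (c * v) ^ 2) * M := by
    intro c hc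
    have step1 : ∑ z ∈ Tc c, β z.1 * α z.2 * K (uf z.1) (vf z.2) ≤
        ∑ u ∈ Uc c, ∑ v ∈ Vc c, β (c * u⁻¹) * (α (c * v) * K u v) := by
      rw [← Finset.sum_product']
      have hinj : Set.InjOn (fun z : γ × γ => (uf z.1, vf z.2)) (Tc c) := by
        intro z hz z' hz' h
        have hz1 := Finset.mem_filter.1 (Finset.mem_coe.1 hz)
        have hz2 := Finset.mem_filter.1 (Finset.mem_coe.1 hz')
        have h' : uf z.1 = uf z'.1 ∧ vf z.2 = vf z'.2 := by
          simpa [Prod.ext_iff] using h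
        have e1 : z.1 = z'.1 := by
          rw [← h1 z hz1.1, ← h1 z' hz2.1, hz1.2, hz2.2, h'.1]
        have e2 : z.2 = z'.2 := by
          rw [← h2 z hz1.1, ← h2 z' hz2.1, hz1.2, hz2.2, h'.2]
        exact Prod.ext e1 e2
      calc ∑ z ∈ Tc c, β z.1 * α z.2 * K (uf z.1) (vf z.2)
          = ∑ w ∈ (Tc c).image (fun z => (uf z.1, vf z.2)),
              β (c * w.1⁻¹) * (α (c * w.2) * K w.1 w.2) := by
            rw [Finset.sum_image (fun z hz z' hz' h => hinj hz hz' h)]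
            apply Finset.sum_congr rfl
            intro z hz
            have hzf := Finset.mem_filter.1 hz
            have e1 : c * (uf z.1)⁻¹ = z.1 := by rw [← hzf.2]; exact h1 z hzf.1
            have e2 : c * vf z.2 = z.2 := by rw [← hzf.2]; exact h2 z hzf.1
            rw [e1, e2]; ring
        _ ≤ ∑ w ∈ Uc c ×ˢ Vc c, β (c * w.1⁻¹) * (α (c * w.2) * K w.1 w.2) := by
            apply Finset.sum_le_sum_of_subset_of_nonneg
            · intro w hw
              obtain ⟨z, hz, rfl⟩ := Finset.mem_image.1 hw
              exact Finset.mem_product.2 ⟨Finset.mem_image_of_mem _ hz,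
                Finset.mem_image_of_mem _ hz⟩
            · intro w _ _
              exact mul_nonneg (hβ _) (mul_nonneg (hα _) (hK _ _))
    refine step1.trans ?_
    refine (cs_kernel (Uc c) (Vc c) (fun u => β (c * u⁻¹)) (fun v => α (c * v)) K
      (fun _ => hβ _) (fun _ => hα _) hK).trans ?_
    apply mul_le_mul_of_nonneg_left _ (mul_nonneg (Real.sqrt_nonneg _) (Real.sqrt_nonneg _))
    rw [show M = Real.sqrt (M ^ 2) by rw [Real.sqrt_sq hM]]
    apply Real.sqrt_le_sqrt
    apply hMK
    · rintro u hu
      obtain ⟨z, hz, rfl⟩ := Finset.mem_image.1 hu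
      exact ⟨z, (Finset.mem_filter.1 hz).1, rfl⟩
    · rintro v hv
      obtain ⟨z, hz, rfl⟩ := Finset.mem_image.1 hv
      exact ⟨z, (Finset.mem_filter.1 hz).1, rfl⟩
  -- sum over c
  have hsumB : ∑ c ∈ C, ∑ q ∈ (Tc c).image Prod.fst, β q ^ 2 ≤ Nb ^ 2 := by
    refine le_trans (le_of_eq ?_) hNb2
    have himg : ∀ c, (Tc c).image Prod.fst = (T.image Prod.fst).filter (fun q => cf q = c) := by
      intro c
      ext q
      constructor
      · intro hq
        obtain ⟨z, hz, rfl⟩ := Finset.mem_image.1 hq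
        have hzf := Finset.mem_filter.1 hz
        exact Finset.mem_filter.2 ⟨Finset.mem_image_of_mem _ hzf.1, hzf.2⟩
      · intro hq
        have hqf := Finset.mem_filter.1 hq
        obtain ⟨z, hz, rfl⟩ := Finset.mem_image.1 hqf.1
        exact Finset.mem_image_of_mem _ (Finset.mem_filter.2 ⟨hz, hqf.2⟩)
    simp_rw [himg]
    exact Finset.sum_fiberwise_of_maps_to (fun q hq => by
      obtain ⟨z, hz, rfl⟩ := Finset.mem_image.1 hq
      exact Finset.mem_image_of_mem _ hz) _
  have hsumA : ∑ c ∈ C, ∑ p ∈ (Tc c).image Prod.snd, α p ^ 2 ≤ Na ^ 2 := by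
    refine le_trans (le_of_eq ?_) hNa2
    have key : ∀ z ∈ T, z.2 * (vf z.2)⁻¹ = cf z.1 := by
      intro z hz
      have h' : cf z.1 * vf z.2 * (vf z.2)⁻¹ = cf z.1 := mul_inv_cancel_right _ _
      rw [h2 z hz] at h'
      exact h'
    have himg : ∀ c, (Tc c).image Prod.snd =
        (T.image Prod.snd).filter (fun p => p * (vf p)⁻¹ = c) := by
      intro c
      ext p
      constructor
      · intro hp
        obtain ⟨z, hz, rfl⟩ := Finset.mem_image.1 hp
        have hzf := Finset.mem_filter.1 hz
        refine Finset.mem_filter.2 ⟨Finset.mem_image_of_mem _ hzf.1, ?_⟩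
        rw [key z hzf.1, hzf.2]
      · intro hp
        have hpf := Finset.mem_filter.1 hp
        obtain ⟨z, hz, rfl⟩ := Finset.mem_image.1 hpf.1
        refine Finset.mem_image_of_mem _ (Finset.mem_filter.2 ⟨hz, ?_⟩)
        rw [← hpf.2, key z hz]
    simp_rw [himg]
    exact Finset.sum_fiberwise_of_maps_to (fun p hp => by
      obtain ⟨z, hz, rfl⟩ := Finset.mem_image.1 hp
      rw [key z hz]
      exact Finset.mem_image_of_mem _ hz) _
  calc ∑ c ∈ C, ∑ z ∈ Tc c, β z.1 * α z.2 * K (uf z.1) (vf z.2)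
      ≤ ∑ c ∈ C, Real.sqrt (∑ u ∈ Uc c, β (c * u⁻¹) ^ 2) *
          Real.sqrt (∑ v ∈ Vc c, α (c * v) ^ 2) * M := Finset.sum_le_sum hperc
    _ = M * ∑ c ∈ C, Real.sqrt (∑ q ∈ (Tc c).image Prod.fst, β q ^ 2) *
          Real.sqrt (∑ p ∈ (Tc c).image Prod.snd, α p ^ 2) := by
        rw [Finset.mul_sum]
        apply Finset.sum_congr rfl
        intro c hc
        rw [hBc c hc, hAc c hc]; ring
    _ ≤ M * (Real.sqrt (∑ c ∈ C, ∑ q ∈ (Tc c).image Prod.fst, β q ^ 2) *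
          Real.sqrt (∑ c ∈ C, ∑ p ∈ (Tc c).image Prod.snd, α p ^ 2)) := by
        apply mul_le_mul_of_nonneg_left _ hM
        exact Real.sum_sqrt_mul_sqrt_le C
          (fun c => Finset.sum_nonneg fun q _ => sq_nonneg _)
          (fun c => Finset.sum_nonneg fun p _ => sq_nonneg _)
    _ ≤ M * (Nb * Na) := by
        apply mul_le_mul_of_nonneg_left _ hM
        apply mul_le_mul
        · rw [show Nb = Real.sqrt (Nb ^ 2) by rw [Real.sqrt_sq hNb]]
          exact Real.sqrt_le_sqrt hsumB
        · rw [show Na = Real.sqrt (Na ^ 2) by rw [Real.sqrt_sq hNa]]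
          exact Real.sqrt_le_sqrt hsumA
        · exact Real.sqrt_nonneg _
        · exact hNb
    _ = M * (Na * Nb) := by ring




open FreeGroup

section FGLemmas
variable {α : Type*} [DecidableEq α]

lemma rd_drop (q : FreeGroup α) (m : ℕ) : Rd (q.toWord.drop m) :=
  rd_append_right ((q.toWord.take_append_drop m).symm ▸ rd_toWord q)

lemma toWord_mk_drop (q : FreeGroup α) (m : ℕ) :
    (mk (q.toWord.drop m)).toWord = q.toWord.drop m :=
  toWord_mk_rd (rd_drop q m)

lemma dec_q (q p : FreeGroup α) :
    mk (q.toWord.take (lcp q.toWord p.toWord)) * mk (q.toWord.drop (lcp q.toWord p.toWord)) = q := by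
  rw [mul_mk, List.take_append_drop, mk_toWord]

lemma dec_p (q p : FreeGroup α) :
    mk (q.toWord.take (lcp q.toWord p.toWord)) * mk (p.toWord.drop (lcp q.toWord p.toWord)) = p := by
  rw [mul_mk, lcp_take, List.take_append_drop, mk_toWord]

lemma geom_len (q p : FreeGroup α) :
    (q⁻¹ * p).toWord.length =
      (q.toWord.length - lcp q.toWord p.toWord) +
        (p.toWord.length - lcp q.toWord p.toWord) := by
  rw [geom]; simp [invRev_length]

lemma uv_eq (q p : FreeGroup α) :
    (mk (q.toWord.drop (lcp q.toWord p.toWord)))⁻¹ *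
      mk (p.toWord.drop (lcp q.toWord p.toWord)) = q⁻¹ * p := by
  have h : (mk (q.toWord.take (lcp q.toWord p.toWord)) *
        mk (q.toWord.drop (lcp q.toWord p.toWord)))⁻¹ *
      (mk (q.toWord.take (lcp q.toWord p.toWord)) *
        mk (p.toWord.drop (lcp q.toWord p.toWord))) =
      (mk (q.toWord.drop (lcp q.toWord p.toWord)))⁻¹ *
        mk (p.toWord.drop (lcp q.toWord p.toWord)) := by
    group
  rw [dec_q q p, dec_p q p] at h
  exact h.symm

end FGLemmas

section Sphere
variable {r : ℕ}

lemma mem_sphereF {m : ℕ} {x : FG r} : x ∈ sphereF r m ↔ wlen x = m := by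
  constructor
  · intro h; exact (Finset.mem_filter.1 h).2
  · intro h
    refine Finset.mem_filter.2 ⟨?_, h⟩
    rw [ballF, Set.Finite.mem_toFinset]
    exact le_of_eq h

/-- kernel -/
def Kk (φ : FG r → ℂ) (s t : ℕ) (u v : FG r) : ℝ :=
  if wlen (u * v) = s + t ∧ wlen u = s ∧ wlen v = t then ‖φ (u * v)‖ else 0

lemma Kk_nonneg (φ : FG r → ℂ) (s t : ℕ) (u v : FG r) : 0 ≤ Kk φ s t u v := by
  unfold Kk; split_ifs <;> simp [norm_nonneg]

lemma ksum (φ : FG r → ℂ) (s t : ℕ) (U V : Finset (FG r)) :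
    ∑ u ∈ U, ∑ v ∈ V, (Kk φ s t u v) ^ 2 ≤ ∑ w ∈ sphereF r (s + t), ‖φ w‖ ^ 2 := by
  classical
  rw [← Finset.sum_product']
  have e1 : ∑ z ∈ U ×ˢ V, (Kk φ s t z.1 z.2) ^ 2 =
      ∑ z ∈ (U ×ˢ V).filter (fun z =>
        wlen (z.1 * z.2) = s + t ∧ wlen z.1 = s ∧ wlen z.2 = t), ‖φ (z.1 * z.2)‖ ^ 2 := by
    rw [Finset.sum_filter]
    apply Finset.sum_congr rfl
    intro z _
    unfold Kk
    split_ifs <;> simp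
  rw [e1]
  have hinj : ∀ z ∈ (U ×ˢ V).filter (fun z =>
      wlen (z.1 * z.2) = s + t ∧ wlen z.1 = s ∧ wlen z.2 = t), ∀ z' ∈ (U ×ˢ V).filter (fun z =>
      wlen (z.1 * z.2) = s + t ∧ wlen z.1 = s ∧ wlen z.2 = t),
      z.1 * z.2 = z'.1 * z'.2 → z = z' := by
    intro z hz z' hz' h
    obtain ⟨-, hz1, hz2, hz3⟩ := Finset.mem_filter.1 hz
    obtain ⟨-, hz1', hz2', hz3'⟩ := Finset.mem_filter.1 hz'
    have hw : (z.1 * z.2).toWord = z.1.toWord ++ z.2.toWord :=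
      toWord_mul_of_len (by
        show (z.1*z.2).toWord.length = z.1.toWord.length + z.2.toWord.length
        rw [show (z.1*z.2).toWord.length = wlen (z.1*z.2) from rfl] at *
        rw [hz1]; rw [show z.1.toWord.length = wlen z.1 from rfl,
          show z.2.toWord.length = wlen z.2 from rfl, hz2, hz3])
    have hw' : (z'.1 * z'.2).toWord = z'.1.toWord ++ z'.2.toWord :=
      toWord_mul_of_len (by
        rw [show (z'.1*z'.2).toWord.length = wlen (z'.1*z'.2) from rfl,
          show z'.1.toWord.length = wlen z'.1 from rfl,
          show z'.2.toWord.length = wlen z'.2 from rfl, hz1', hz2', hz3'])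
    have h1 : z.1 = z'.1 := by
      apply FreeGroup.toWord_injective
      have t1 : z.1.toWord = ((z.1*z.2).toWord).take s := by
        rw [hw, ← hz2]; exact List.take_left.symm
      have t2 : z'.1.toWord = ((z'.1*z'.2).toWord).take s := by
        rw [hw', ← hz2']; exact List.take_left.symm
      rw [t1, t2, h]
    have h2 : z.2 = z'.2 := by
      have := h; rw [h1] at this
      exact mul_left_cancel this
    exact Prod.ext h1 h2
  rw [← Finset.sum_image (f := fun w => ‖φ w‖ ^ 2) (g := fun z : FG r × FG r => z.1 * z.2) hinj]
  apply Finset.sum_le_sum_of_subset_of_nonneg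
  · intro w hw
    obtain ⟨z, hz, rfl⟩ := Finset.mem_image.1 hw
    exact mem_sphereF.2 (Finset.mem_filter.1 hz).2.1
  · intro _ _ _; positivity

end Sphere

section Arith

lemma pair_sum (f : ℕ → ℝ) : ∀ n : ℕ,
    ∑ k ∈ Finset.Icc 1 (2 * n), f k = ∑ ℓ ∈ Finset.Icc 1 n, (f (2 * ℓ - 1) + f (2 * ℓ))
  | 0 => by simp
  | n + 1 => by
    have h1 : 2 * (n + 1) = (2 * n + 1) + 1 := by ring
    rw [h1, Finset.sum_Icc_succ_top (by omega), Finset.sum_Icc_succ_top (by omega),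
      pair_sum f n, Finset.sum_Icc_succ_top (by omega : 1 ≤ n + 1)]
    have : 2 * (n+1) - 1 = 2*n+1 := by omega
    rw [this]
    have : 2 * (n+1) = 2*n+1+1 := by omega
    rw [this]
    ring

lemma arith (n i : ℕ) (hn : 1 ≤ n) (hi : i ≤ 2 * n) (M w : ℕ → ℝ)
    (hM : ∀ k, 0 ≤ M k) (hw : ∀ ℓ, M (2 * ℓ - 1) + M (2 * ℓ) ≤ w ℓ) :
    ∑ k ∈ Finset.Icc 1 (2 * n), ((2 * n + 1 - k : ℕ) : ℝ) * M k ≤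
      4 * ∑ ℓ ∈ Finset.Icc 1 n, ((n : ℝ) + 1 - (ℓ : ℝ)) ^ 2 * w ℓ := by
  rw [pair_sum (fun k => ((2 * n + 1 - k : ℕ) : ℝ) * M k) n, Finset.mul_sum]
  apply Finset.sum_le_sum
  intro ℓ hℓ
  obtain ⟨hℓ1, hℓ2⟩ := Finset.mem_Icc.1 hℓ
  set t : ℝ := (n : ℝ) + 1 - (ℓ : ℝ) with ht
  have htge : 1 ≤ t := by
    rw [ht]
    have : (ℓ : ℝ) ≤ (n : ℝ) := by exact_mod_cast hℓ2
    linarith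
  have hc1 : ((2 * n + 1 - (2 * ℓ - 1) : ℕ) : ℝ) = 2 * t := by
    have h1 : 2 * ℓ - 1 ≤ 2 * n + 1 := by omega
    have : (2 * n + 1 - (2 * ℓ - 1) : ℕ) = 2 * n + 2 - 2 * ℓ := by omega
    rw [this, ht]
    push_cast [show 2 * ℓ ≤ 2 * n + 2 by omega]
    ring
  have hc2 : ((2 * n + 1 - 2 * ℓ : ℕ) : ℝ) ≤ 2 * t := by
    have : (2 * n + 1 - 2 * ℓ : ℕ) ≤ 2 * n + 2 - 2 * ℓ := by omega
    calc ((2 * n + 1 - 2 * ℓ : ℕ) : ℝ) ≤ ((2 * n + 2 - 2 * ℓ : ℕ) : ℝ) := by exact_mod_cast this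
      _ = 2 * t := by
          rw [ht]; push_cast [show 2 * ℓ ≤ 2 * n + 2 by omega]; ring
  have hMM : M (2 * ℓ - 1) + M (2 * ℓ) ≤ w ℓ := hw ℓ
  have hw0 : 0 ≤ w ℓ := le_trans (add_nonneg (hM _) (hM _)) hMM
  calc ((2 * n + 1 - (2 * ℓ - 1) : ℕ) : ℝ) * M (2 * ℓ - 1) +
        ((2 * n + 1 - 2 * ℓ : ℕ) : ℝ) * M (2 * ℓ) ≤
      2 * t * M (2 * ℓ - 1) + 2 * t * M (2 * ℓ) := by
        apply add_le_add
        · rw [hc1]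
        · exact mul_le_mul_of_nonneg_right hc2 (hM _)
    _ = 2 * t * (M (2 * ℓ - 1) + M (2 * ℓ)) := by ring
    _ ≤ 2 * t * w ℓ := by
        apply mul_le_mul_of_nonneg_left hMM (by linarith)
    _ ≤ 4 * (t ^ 2 * w ℓ) := by
        have : 2 * t ≤ 4 * t ^ 2 := by nlinarith
        calc 2 * t * w ℓ ≤ 4 * t ^ 2 * w ℓ := mul_le_mul_of_nonneg_right this hw0
          _ = 4 * (t ^ 2 * w ℓ) := by ring

end Arith

section Fiber
variable {r : ℕ}

lemma wlen_def (x : FG r) : wlen x = x.toWord.length := rfl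

lemma wlen_norm (x : FG r) : wlen x = FreeGroup.norm x := rfl

lemma conj_cancel (g h x : FG r) : (g⁻¹ * h)⁻¹ * (g⁻¹ * x) = h⁻¹ * x := by group

lemma sum_sq_le (c : MonoidAlgebra ℂ (FG r)) (D : Finset (FG r)) :
    ∑ q ∈ D, ‖c.coeff q‖ ^ 2 ≤ ∑ q ∈ c.coeff.support, ‖c.coeff q‖ ^ 2 := by
  classical
  have h1 : ∑ q ∈ D.filter (fun q => q ∈ c.coeff.support), ‖c.coeff q‖ ^ 2 = ∑ q ∈ D, ‖c.coeff q‖ ^ 2 := by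
    apply Finset.sum_filter_of_ne
    intro q _ hq
    by_contra hmem
    apply hq
    have : c.coeff q = 0 := Finsupp.notMem_support_iff.1 hmem
    simp [this]
  rw [← h1]
  apply Finset.sum_le_sum_of_subset_of_nonneg
  · intro q hq; exact (Finset.mem_filter.1 hq).2
  · intro _ _ _; positivity

lemma mk_take_drop (L : List (Fin r × Bool)) (m : ℕ) :
    FreeGroup.mk (L.take m) * FreeGroup.mk (L.drop m) = FreeGroup.mk L := by
  rw [FreeGroup.mul_mk, List.take_append_drop]

lemma l2norm_sq (c : MonoidAlgebra ℂ (FG r)) : l2norm c ^ 2 = ∑ q ∈ c.coeff.support, ‖c.coeff q‖ ^ 2 :=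
  Real.sq_sqrt (Finset.sum_nonneg fun _ _ => sq_nonneg _)

lemma fiber_bound (φ : FG r → ℂ) (hunit : φ 1 = 1) (n i : ℕ) (hi : i ≤ 2 * n) (g : FG r)
    (a b : MonoidAlgebra ℂ (FG r))
    (hsa : ∀ x ∈ a.coeff.support, wlen (g⁻¹ * x) ≤ 2 * n - i)
    (hsb : ∀ x ∈ b.coeff.support, wlen (g⁻¹ * x) ≤ i)
    (k s : ℕ) :
    ∑ z ∈ (b.coeff.support ×ˢ a.coeff.support).filter (fun z =>
        (wlen (z.1⁻¹ * z.2),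
          wlen (g⁻¹ * z.1) - lcp (g⁻¹ * z.1).toWord (g⁻¹ * z.2).toWord) = (k, s)),
      ‖b.coeff z.1‖ * ‖a.coeff z.2‖ * ‖φ (z.1⁻¹ * z.2)‖ ≤
      (if k = 0 then (if s = 0 then 1 else 0) else
        (if s ≤ i ∧ k ≤ s + (2 * n - i) ∧ s ≤ k then
          Real.sqrt (∑ w ∈ sphereF r k, ‖φ w‖ ^ 2) else 0)) * (l2norm a * l2norm b) := by
  classical
  set T := (b.coeff.support ×ˢ a.coeff.support).filter (fun z =>
      (wlen (z.1⁻¹ * z.2),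
        wlen (g⁻¹ * z.1) - lcp (g⁻¹ * z.1).toWord (g⁻¹ * z.2).toWord) = (k, s)) with hT
  -- basic facts for members of T
  have hfacts : ∀ z ∈ T, z.1 ∈ b.coeff.support ∧ z.2 ∈ a.coeff.support ∧
      wlen ((g⁻¹ * z.1)⁻¹ * (g⁻¹ * z.2)) = k ∧
      lcp (g⁻¹ * z.1).toWord (g⁻¹ * z.2).toWord + s = wlen (g⁻¹ * z.1) ∧
      lcp (g⁻¹ * z.1).toWord (g⁻¹ * z.2).toWord + (k - s) = wlen (g⁻¹ * z.2) ∧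
      s ≤ k ∧ wlen (g⁻¹ * z.1) ≤ i ∧ wlen (g⁻¹ * z.2) ≤ 2 * n - i := by
    intro z hz
    obtain ⟨hzm, hzc⟩ := Finset.mem_filter.1 hz
    obtain ⟨hz1, hz2⟩ := Finset.mem_product.1 hzm
    have hk : wlen (z.1⁻¹ * z.2) = k := (Prod.ext_iff.1 hzc).1
    have hs : wlen (g⁻¹ * z.1) - lcp (g⁻¹ * z.1).toWord (g⁻¹ * z.2).toWord = s :=
      (Prod.ext_iff.1 hzc).2
    set q' := g⁻¹ * z.1
    set p' := g⁻¹ * z.2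
    set m := lcp q'.toWord p'.toWord with hm
    have hk' : wlen (q'⁻¹ * p') = k := by rw [conj_cancel]; exact hk
    have hmq : m ≤ wlen q' := lcp_le_left _ _
    have hmp : m ≤ wlen p' := lcp_le_right _ _
    have hgl : wlen (q'⁻¹ * p') = (wlen q' - m) + (wlen p' - m) := geom_len q' p'
    have hqi : wlen q' ≤ i := hsb z.1 hz1
    have hpi : wlen p' ≤ 2 * n - i := hsa z.2 hz2
    refine ⟨hz1, hz2, hk', by omega, by omega, by omega, hqi, hpi⟩
  by_cases hk0 : k = 0
  · subst hk0
    by_cases hs0 : s = 0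
    · subst hs0
      rw [if_pos rfl, if_pos rfl, one_mul]
      -- diagonal case
      have hdiag : ∀ z ∈ T, z.2 = z.1 := by
        intro z hz
        obtain ⟨-, -, hk', -⟩ := hfacts z hz
        have : (g⁻¹ * z.1)⁻¹ * (g⁻¹ * z.2) = 1 := by
          rw [← FreeGroup.norm_eq_zero, ← wlen_norm]; exact hk'
        rw [conj_cancel] at this
        have := mul_eq_one_iff_inv_eq.1 this
        rw [inv_inv] at this; exact this.symm
      have hinj : ∀ z ∈ T, ∀ z' ∈ T, z.1 = z'.1 → z = z' := by
        intro z hz z' hz' h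
        exact Prod.ext h (by rw [hdiag z hz, hdiag z' hz', h])
      calc ∑ z ∈ T, ‖b.coeff z.1‖ * ‖a.coeff z.2‖ * ‖φ (z.1⁻¹ * z.2)‖
          = ∑ z ∈ T, ‖b.coeff z.1‖ * ‖a.coeff z.1‖ := by
            apply Finset.sum_congr rfl
            intro z hz
            have h2 := hdiag z hz
            rw [h2]
            have : z.1⁻¹ * z.1 = 1 := inv_mul_cancel z.1
            rw [this, hunit]
            simp
        _ = ∑ q ∈ T.image Prod.fst, ‖b.coeff q‖ * ‖a.coeff q‖ := by
            rw [Finset.sum_image (fun z hz z' hz' h => hinj z hz z' hz' h)]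
        _ ≤ Real.sqrt (∑ q ∈ T.image Prod.fst, ‖b.coeff q‖ ^ 2) *
              Real.sqrt (∑ q ∈ T.image Prod.fst, ‖a.coeff q‖ ^ 2) :=
            Real.sum_mul_le_sqrt_mul_sqrt _ _ _
        _ ≤ l2norm b * l2norm a := by
            apply mul_le_mul
            · exact Real.sqrt_le_sqrt (sum_sq_le b _)
            · exact Real.sqrt_le_sqrt (sum_sq_le a _)
            · exact Real.sqrt_nonneg _
            · exact Real.sqrt_nonneg _
        _ = l2norm a * l2norm b := mul_comm _ _
    · -- s ≠ 0 : fiber empty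
      have hTe : T = ∅ := by
        apply Finset.eq_empty_of_forall_notMem
        intro z hz
        obtain ⟨-, -, -, -, -, hsk, -⟩ := hfacts z hz
        omega
      rw [hTe]
      simp [if_neg hs0]
  · -- k ≥ 1
    by_cases hcond : s ≤ i ∧ k ≤ s + (2 * n - i) ∧ s ≤ k
    · rw [if_neg hk0, if_pos hcond]
      obtain ⟨hsi, hks, hsk⟩ := hcond
      -- apply core
      set cf : FG r → FG r := fun q =>
        g * FreeGroup.mk ((g⁻¹ * q).toWord.take (wlen (g⁻¹ * q) - s)) with hcf
      set uf : FG r → FG r := fun q =>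
        (FreeGroup.mk ((g⁻¹ * q).toWord.drop (wlen (g⁻¹ * q) - s)))⁻¹ with huf
      set vf : FG r → FG r := fun p =>
        FreeGroup.mk ((g⁻¹ * p).toWord.drop (wlen (g⁻¹ * p) - (k - s))) with hvf
      have hidx : ∀ z ∈ T,
          wlen (g⁻¹ * z.1) - s = lcp (g⁻¹ * z.1).toWord (g⁻¹ * z.2).toWord ∧
          wlen (g⁻¹ * z.2) - (k - s) = lcp (g⁻¹ * z.1).toWord (g⁻¹ * z.2).toWord := by
        intro z hz
        obtain ⟨-, -, -, h4, h5, -⟩ := hfacts z hz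
        omega
      have h1 : ∀ z ∈ T, cf z.1 * (uf z.1)⁻¹ = z.1 := by
        intro z hz
        rw [hcf, huf]
        simp only [inv_inv]
        rw [mul_assoc, mk_take_drop, FreeGroup.mk_toWord, mul_inv_cancel_left]
      have h2 : ∀ z ∈ T, cf z.1 * vf z.2 = z.2 := by
        intro z hz
        obtain ⟨hi1, hi2⟩ := hidx z hz
        rw [hcf, hvf]
        simp only
        rw [hi1, hi2, lcp_take, mul_assoc, mk_take_drop, FreeGroup.mk_toWord,
          mul_inv_cancel_left]
      have hKval : ∀ z ∈ T, Kk φ s (k - s) (uf z.1) (vf z.2) = ‖φ (z.1⁻¹ * z.2)‖ := by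
        intro z hz
        obtain ⟨hi1, hi2⟩ := hidx z hz
        obtain ⟨-, -, hk', h4, h5, -⟩ := hfacts z hz
        have huv : uf z.1 * vf z.2 = z.1⁻¹ * z.2 := by
          rw [huf, hvf]
          simp only
          rw [hi1, hi2, uv_eq, conj_cancel]
        have hwu : wlen (uf z.1) = s := by
          rw [huf]
          simp only
          rw [wlen_norm, FreeGroup.norm_inv_eq, ← wlen_norm, wlen_def, toWord_mk_drop,
            List.length_drop, hi1, ← wlen_def (g⁻¹ * z.1)]
          omega
        have hwv : wlen (vf z.2) = k - s := by
          rw [hvf]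
          simp only
          rw [wlen_def, toWord_mk_drop, List.length_drop, hi2, ← wlen_def (g⁻¹ * z.2)]
          omega
        have hwuv : wlen (uf z.1 * vf z.2) = s + (k - s) := by
          rw [huv, ← conj_cancel g z.1 z.2, hk']
          omega
        rw [Kk, if_pos ⟨hwuv, hwu, hwv⟩, huv]
      have hmain := core T cf uf vf (Kk φ s (k - s)) (fun x => ‖a.coeff x‖) (fun q => ‖b.coeff q‖)
        (Real.sqrt (∑ w ∈ sphereF r k, ‖φ w‖ ^ 2)) (l2norm a) (l2norm b)
        (fun _ => norm_nonneg _) (fun _ => norm_nonneg _) (Kk_nonneg φ _ _)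
        (Real.sqrt_nonneg _) h1 h2
        (by
          intro U V _ _
          have := ksum φ s (k - s) U V
          rw [show s + (k - s) = k by omega] at this
          refine this.trans ?_
          rw [Real.sq_sqrt (Finset.sum_nonneg fun _ _ => by positivity)])
        (by rw [l2norm_sq]; exact sum_sq_le b _)
        (by rw [l2norm_sq]; exact sum_sq_le a _)
        (Real.sqrt_nonneg _) (Real.sqrt_nonneg _)
      calc ∑ z ∈ T, ‖b.coeff z.1‖ * ‖a.coeff z.2‖ * ‖φ (z.1⁻¹ * z.2)‖
          = ∑ z ∈ T, ‖b.coeff z.1‖ * ‖a.coeff z.2‖ * Kk φ s (k - s) (uf z.1) (vf z.2) := by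
            apply Finset.sum_congr rfl
            intro z hz
            rw [hKval z hz]
        _ ≤ Real.sqrt (∑ w ∈ sphereF r k, ‖φ w‖ ^ 2) * (l2norm a * l2norm b) := hmain
    · have hTe : T = ∅ := by
        apply Finset.eq_empty_of_forall_notMem
        intro z hz
        obtain ⟨-, -, -, h4, h5, hsk, hqi, hpi⟩ := hfacts z hz
        omega
      rw [hTe]
      simp [if_neg hk0, if_neg hcond]

end Fiber
section Main

lemma sum_range_split (f : ℕ → ℝ) (m : ℕ) :
    ∑ k ∈ Finset.range (m + 1), f k = f 0 + ∑ k ∈ Finset.Icc 1 m, f k := by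
  rw [Finset.range_eq_Ico, ← Finset.Ico_add_one_right_eq_Icc,
    ← Finset.sum_Ico_consecutive f (Nat.zero_le 1) (Nat.succ_le_succ (Nat.zero_le m))]
  congr 1
  rw [show Finset.Ico 0 1 = Finset.range 1 from by rw [Finset.range_eq_Ico],
    Finset.sum_range_one]

lemma cnt_le (n i k : ℕ) (hk1 : 1 ≤ k) (hk2 : k ≤ 2 * n) (hi : i ≤ 2 * n) :
    ((Finset.range (2 * n + 1)).filter
      (fun s => s ≤ i ∧ k ≤ s + (2 * n - i) ∧ s ≤ k)).card ≤ 2 * n + 1 - k := by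
  have hsub : (Finset.range (2 * n + 1)).filter (fun s => s ≤ i ∧ k ≤ s + (2 * n - i) ∧ s ≤ k)
      ⊆ Finset.Icc (k - (2 * n - i)) (min i k) := by
    intro s hs
    obtain ⟨-, h1, h2, h3⟩ := Finset.mem_filter.1 hs
    exact Finset.mem_Icc.2 ⟨by omega, by omega⟩
  calc _ ≤ (Finset.Icc (k - (2 * n - i)) (min i k)).card := Finset.card_le_card hsub
    _ = min i k + 1 - (k - (2 * n - i)) := Nat.card_Icc _ _
    _ ≤ 2 * n + 1 - k := by omega

theorem statement17' (r : ℕ) (hr : 1 ≤ r) (φ : FG r → ℂ)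
    (hφ : IsPosDefFn1 φ) (hunit : φ 1 = 1)
    (n : ℕ) (hn : 1 ≤ n) (i : ℕ) (hi : i ≤ 2 * n) (g : FG r)
    (a b : MonoidAlgebra ℂ (FG r))
    (hsa : ∀ x ∈ a.coeff.support, wlen (g⁻¹ * x) ≤ 2 * n - i)
    (hsb : ∀ x ∈ b.coeff.support, wlen (g⁻¹ * x) ≤ i) :
    ‖∑ x ∈ a.coeff.support, ∑ h ∈ b.coeff.support, a.coeff x * (starRingEnd ℂ) (b.coeff h) * φ (h⁻¹ * x)‖
      ≤ Wφ φ n * (l2norm a * l2norm b) := by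
  classical
  have step1 : ‖∑ x ∈ a.coeff.support, ∑ h ∈ b.coeff.support, a.coeff x * (starRingEnd ℂ) (b.coeff h) * φ (h⁻¹ * x)‖ ≤
      ∑ z ∈ b.coeff.support ×ˢ a.coeff.support, ‖b.coeff z.1‖ * ‖a.coeff z.2‖ * ‖φ (z.1⁻¹ * z.2)‖ := by
    calc ‖∑ x ∈ a.coeff.support, ∑ h ∈ b.coeff.support, a.coeff x * (starRingEnd ℂ) (b.coeff h) * φ (h⁻¹ * x)‖
        ≤ ∑ x ∈ a.coeff.support, ‖∑ h ∈ b.coeff.support, a.coeff x * (starRingEnd ℂ) (b.coeff h) * φ (h⁻¹ * x)‖ :=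
          norm_sum_le _ _
      _ ≤ ∑ x ∈ a.coeff.support, ∑ h ∈ b.coeff.support, ‖a.coeff x * (starRingEnd ℂ) (b.coeff h) * φ (h⁻¹ * x)‖ :=
          Finset.sum_le_sum fun x _ => norm_sum_le _ _
      _ = ∑ h ∈ b.coeff.support, ∑ x ∈ a.coeff.support, ‖b.coeff h‖ * ‖a.coeff x‖ * ‖φ (h⁻¹ * x)‖ := by
          rw [Finset.sum_comm]
          apply Finset.sum_congr rfl; intro h _
          apply Finset.sum_congr rfl; intro x _
          rw [norm_mul, norm_mul, RCLike.norm_conj]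
          ring
      _ = ∑ z ∈ b.coeff.support ×ˢ a.coeff.support, ‖b.coeff z.1‖ * ‖a.coeff z.2‖ * ‖φ (z.1⁻¹ * z.2)‖ := by
          rw [Finset.sum_product]
  refine step1.trans ?_
  have hmaps : ∀ z ∈ b.coeff.support ×ˢ a.coeff.support,
      (wlen (z.1⁻¹ * z.2),
        wlen (g⁻¹ * z.1) - lcp (g⁻¹ * z.1).toWord (g⁻¹ * z.2).toWord) ∈
      Finset.range (2 * n + 1) ×ˢ Finset.range (2 * n + 1) := by
    intro z hz
    obtain ⟨hz1, hz2⟩ := Finset.mem_product.1 hz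
    have h1 : wlen (z.1⁻¹ * z.2) ≤ 2 * n := by
      rw [← conj_cancel g z.1 z.2, wlen_norm]
      calc FreeGroup.norm ((g⁻¹ * z.1)⁻¹ * (g⁻¹ * z.2))
          ≤ FreeGroup.norm (g⁻¹ * z.1)⁻¹ + FreeGroup.norm (g⁻¹ * z.2) :=
            FreeGroup.norm_mul_le _ _
        _ = FreeGroup.norm (g⁻¹ * z.1) + FreeGroup.norm (g⁻¹ * z.2) := by
            rw [FreeGroup.norm_inv_eq]
        _ ≤ i + (2 * n - i) := by
            have hb' := hsb z.1 hz1
            have ha' := hsa z.2 hz2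
            rw [wlen_norm] at hb' ha'
            omega
        _ ≤ 2 * n := by omega
    have h2 : wlen (g⁻¹ * z.1) - lcp (g⁻¹ * z.1).toWord (g⁻¹ * z.2).toWord ≤ 2 * n := by
      have := hsb z.1 hz1
      omega
    exact Finset.mem_product.2 ⟨Finset.mem_range.2 (by omega), Finset.mem_range.2 (by omega)⟩
  rw [← Finset.sum_fiberwise_of_maps_to hmaps
    (fun z => ‖b.coeff z.1‖ * ‖a.coeff z.2‖ * ‖φ (z.1⁻¹ * z.2)‖)]
  set C : ℝ := l2norm a * l2norm b with hC
  have hC0 : 0 ≤ C := mul_nonneg (Real.sqrt_nonneg _) (Real.sqrt_nonneg _)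
  set B : ℕ × ℕ → ℝ := fun j =>
    (if j.1 = 0 then (if j.2 = 0 then 1 else 0) else
      (if j.2 ≤ i ∧ j.1 ≤ j.2 + (2 * n - i) ∧ j.2 ≤ j.1 then
        Real.sqrt (∑ w ∈ sphereF r j.1, ‖φ w‖ ^ 2) else 0)) * C with hB
  have hstep2 : ∑ j ∈ Finset.range (2 * n + 1) ×ˢ Finset.range (2 * n + 1),
      ∑ z ∈ (b.coeff.support ×ˢ a.coeff.support).filter (fun z =>
        (wlen (z.1⁻¹ * z.2),
          wlen (g⁻¹ * z.1) - lcp (g⁻¹ * z.1).toWord (g⁻¹ * z.2).toWord) = j),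
      ‖b.coeff z.1‖ * ‖a.coeff z.2‖ * ‖φ (z.1⁻¹ * z.2)‖ ≤
      ∑ j ∈ Finset.range (2 * n + 1) ×ˢ Finset.range (2 * n + 1), B j := by
    apply Finset.sum_le_sum
    rintro ⟨k, s⟩ _
    exact fiber_bound φ hunit n i hi g a b hsa hsb k s
  refine hstep2.trans ?_
  -- now compute the bound sum
  rw [Finset.sum_product]
  set M : ℕ → ℝ := fun k => Real.sqrt (∑ w ∈ sphereF r k, ‖φ w‖ ^ 2) with hM
  have hM0 : ∀ k, 0 ≤ M k := fun k => Real.sqrt_nonneg _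
  have hrow0 : ∑ s ∈ Finset.range (2 * n + 1), B (0, s) = C := by
    have hBs : ∀ s, B (0, s) = (if s = 0 then (1:ℝ) else 0) * C := by
      intro s; simp [hB]
    simp_rw [hBs]
    rw [← Finset.sum_mul, Finset.sum_ite_eq' (Finset.range (2 * n + 1)) 0 (fun _ => (1:ℝ)),
      if_pos (Finset.mem_range.2 (by omega)), one_mul]
  have hrowk : ∀ k, 1 ≤ k → k ≤ 2 * n →
      ∑ s ∈ Finset.range (2 * n + 1), B (k, s) ≤ ((2 * n + 1 - k : ℕ) : ℝ) * M k * C := by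
    intro k hk1 hk2
    have hkne : ¬(k = 0) := by omega
    calc ∑ s ∈ Finset.range (2 * n + 1), B (k, s)
        = (∑ s ∈ Finset.range (2 * n + 1),
            if s ≤ i ∧ k ≤ s + (2 * n - i) ∧ s ≤ k then M k else 0) * C := by
          rw [← Finset.sum_mul]
          apply congrArg (· * C)
          apply Finset.sum_congr rfl
          intro s _
          simp [hB, hM, hkne]
      _ = (((Finset.range (2 * n + 1)).filter
            (fun s => s ≤ i ∧ k ≤ s + (2 * n - i) ∧ s ≤ k)).card : ℝ) * M k * C := by
          rw [← Finset.sum_filter, Finset.sum_const, nsmul_eq_mul]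
      _ ≤ ((2 * n + 1 - k : ℕ) : ℝ) * M k * C := by
          apply mul_le_mul_of_nonneg_right _ hC0
          apply mul_le_mul_of_nonneg_right _ (hM0 k)
          exact_mod_cast cnt_le n i k hk1 hk2 hi
  calc ∑ k ∈ Finset.range (2 * n + 1), ∑ s ∈ Finset.range (2 * n + 1), B (k, s)
      = (∑ s ∈ Finset.range (2 * n + 1), B (0, s)) +
          ∑ k ∈ Finset.Icc 1 (2 * n), ∑ s ∈ Finset.range (2 * n + 1), B (k, s) :=
        sum_range_split _ _
    _ ≤ C + ∑ k ∈ Finset.Icc 1 (2 * n), ((2 * n + 1 - k : ℕ) : ℝ) * M k * C := by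
        rw [hrow0]
        apply add_le_add_right
        apply Finset.sum_le_sum
        intro k hk
        obtain ⟨h1, h2⟩ := Finset.mem_Icc.1 hk
        exact hrowk k h1 h2
    _ = C * (1 + ∑ k ∈ Finset.Icc 1 (2 * n), ((2 * n + 1 - k : ℕ) : ℝ) * M k) := by
        rw [← Finset.sum_mul]
        ring
    _ ≤ C * (1 + 4 * ∑ ℓ ∈ Finset.Icc 1 n, ((n : ℝ) + 1 - (ℓ : ℝ)) ^ 2 * wφ φ ℓ) := by
        apply mul_le_mul_of_nonneg_left _ hC0
        apply add_le_add_right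
        exact arith n i hn hi M (wφ φ) hM0 (fun ℓ => le_of_eq rfl)
    _ = Wφ φ n * (l2norm a * l2norm b) := by
        rw [Wφ, hC]
        ring

end Main

theorem statement17 (r : ℕ) (hr : 1 ≤ r) (φ : FG r → ℂ)
    (hφ : IsPosDefFn1 φ) (hunit : φ 1 = 1)
    (n : ℕ) (hn : 1 ≤ n) (i : ℕ) (hi : i ≤ 2 * n) (g : FG r)
    (a b : MonoidAlgebra ℂ (FG r))
    (hsa : ∀ x ∈ a.coeff.support, wlen (g⁻¹ * x) ≤ 2 * n - i)
    (hsb : ∀ x ∈ b.coeff.support, wlen (g⁻¹ * x) ≤ i) :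
    ‖∑ x ∈ a.coeff.support, ∑ h ∈ b.coeff.support, a.coeff x * (starRingEnd ℂ) (b.coeff h) * φ (h⁻¹ * x)‖
      ≤ Wφ φ n * (l2norm a * l2norm b) := by
  exact statement17' r hr φ hφ hunit n hn i hi g a b hsa hsb

end Annealed
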